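/- The positive modal language with falsum, L⁺_{□,◇,∧,∨,⊥}, is not finitely characterizable: there exist a finite set Prop of propositional variables and a formula φ ∈ L⁺_{□,◇,∧,∨,⊥}[Prop] (for instance φ = □⊥, with Prop containing a variable q) that has no finite characterization with respect to L⁺_{□,◇,∧,∨,⊥}[Prop]. -/
import Mathlib


/-- Modal formulas in negation normal form over propositional variables indexed by `ℕ`.
`var p` is the propositional variable `p`; `nvar p` is the negated literal `¬ p`. -/
inductive MF : Type
  | var  : ℕ → MF
  | nvar : ℕ → MF
  | top  : MF
  | bot  : MF
  | and  : MF → MF → MF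
  | or   : MF → MF → MF
  | dia  : MF → MF
  | box  : MF → MF

/-- Labels for the connectives `∧, ∨, ◇, □, ⊤, ⊥`. -/
inductive Conn : Type
  | conj | disj | dia | box | top | bot

/-- The set of connectives occurring in a modal formula. -/
def MF.conns : MF → Set Conn
  | .var _ => ∅
  | .nvar _ => ∅
  | .top => {Conn.top}
  | .bot => {Conn.bot}
  | .and φ ψ => φ.conns ∪ ψ.conns ∪ {Conn.conj}
  | .or φ ψ => φ.conns ∪ ψ.conns ∪ {Conn.disj}
  | .dia φ => φ.conns ∪ {Conn.dia}
  | .box φ => φ.conns ∪ {Conn.box}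

/-- The set of propositional variables occurring positively (unnegated) in a formula. -/
def MF.pvars : MF → Set ℕ
  | .var p => {p}
  | .nvar _ => ∅
  | .top => ∅
  | .bot => ∅
  | .and φ ψ => φ.pvars ∪ ψ.pvars
  | .or φ ψ => φ.pvars ∪ ψ.pvars
  | .dia φ => φ.pvars
  | .box φ => φ.pvars

/-- The set of propositional variables occurring negatively (negated) in a formula. -/
def MF.nvars : MF → Set ℕ
  | .var _ => ∅
  | .nvar p => {p}
  | .top => ∅
  | .bot => ∅
  | .and φ ψ => φ.nvars ∪ ψ.nvars
  | .or φ ψ => φ.nvars ∪ ψ.nvars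
  | .dia φ => φ.nvars
  | .box φ => φ.nvars

/-- The set of propositional variables occurring in a formula. -/
def MF.vars (φ : MF) : Set ℕ := φ.pvars ∪ φ.nvars

/-- `φ ∈ L_C[P]`: the formula `φ` (in negation normal form, built from literals) uses only
connectives from `C` and variables from `P`. -/
def inLang (C : Set Conn) (P : Set ℕ) (φ : MF) : Prop := φ.conns ⊆ C ∧ φ.vars ⊆ P

/-- A formula is positive if no propositional variable occurs negated in it. -/
def Positive (φ : MF) : Prop := φ.nvars = ∅

/-- A formula is negative if every propositional variable occurs only negated in it. -/
def Negative (φ : MF) : Prop := φ.pvars = ∅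

/-- `φ ∈ L⁺_C[P]`: positive fragment. -/
def inPosLang (C : Set Conn) (P : Set ℕ) (φ : MF) : Prop := inLang C P φ ∧ Positive φ

/-- `φ ∈ L⁻_C[P]`: negative fragment. -/
def inNegLang (C : Set Conn) (P : Set ℕ) (φ : MF) : Prop := inLang C P φ ∧ Negative φ

/-- A Kripke model: a set of worlds, an accessibility relation, and a valuation. -/
structure KModel : Type 1 where
  W : Type
  R : W → W → Prop
  V : ℕ → Set W

/-- A pointed Kripke model. -/
structure PModel : Type 1 where
  M : KModel
  s : M.W

/-- Satisfaction of a modal formula at a world of a Kripke model. -/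
def KModel.sat (M : KModel) : M.W → MF → Prop
  | s, .var p => s ∈ M.V p
  | s, .nvar p => s ∉ M.V p
  | _, .top => True
  | _, .bot => False
  | s, .and φ ψ => M.sat s φ ∧ M.sat s ψ
  | s, .or φ ψ => M.sat s φ ∨ M.sat s ψ
  | s, .dia φ => ∃ t, M.R s t ∧ M.sat t φ
  | s, .box φ => ∀ t, M.R s t → M.sat t φ

/-- Satisfaction in a pointed model. -/
def PModel.sat (e : PModel) (φ : MF) : Prop := e.M.sat e.s φ

/-- A pointed model is finite if its set of worlds is finite. -/
def PModel.finite (e : PModel) : Prop := Finite e.M.W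

/-- `φ` fits the pair of example sets `(Epos, Eneg)`. -/
def Fits (φ : MF) (Epos Eneg : Set PModel) : Prop :=
  (∀ e ∈ Epos, e.sat φ) ∧ (∀ e ∈ Eneg, ¬ e.sat φ)

/-- Semantic equivalence of modal formulas. -/
def EquivF (φ ψ : MF) : Prop := ∀ e : PModel, e.sat φ ↔ e.sat ψ

/-- Semantic entailment of modal formulas. -/
def Entails (φ ψ : MF) : Prop := ∀ e : PModel, e.sat φ → e.sat ψ

/-- `(Epos, Eneg)` is a finite characterization of `φ` with respect to the set `L` of
formulas: both sets are finite, consist of finite pointed models, `φ` fits them, and every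
`ψ ∈ L` fitting them is semantically equivalent to `φ`. -/
def FinChar (L : Set MF) (φ : MF) (Epos Eneg : Set PModel) : Prop :=
  Epos.Finite ∧ Eneg.Finite ∧
  (∀ e ∈ Epos, e.finite) ∧ (∀ e ∈ Eneg, e.finite) ∧
  Fits φ Epos Eneg ∧
  ∀ ψ ∈ L, Fits ψ Epos Eneg → EquivF φ ψ

/-- `boxn m` is `□^m ⊥`. -/
def boxn : ℕ → MF
  | 0 => .bot
  | n + 1 => .box (boxn n)

/-- `dian m` is `◇^m □⊥`. -/
def dian : ℕ → MF
  | 0 => .box .bot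
  | n + 1 => .dia (dian n)

lemma dian_not_boxn {M : KModel} {s : M.W} : ∀ m, M.sat s (dian m) → ¬ M.sat s (boxn m) := by
  intro m
  induction m generalizing s with
  | zero => intro _ hb; exact hb
  | succ n ih =>
    intro hd hb
    obtain ⟨t, hrt, ht⟩ := hd
    exact ih ht (hb t hrt)

lemma boxn_mono {M : KModel} {s : M.W} : ∀ m, M.sat s (boxn m) → M.sat s (boxn (m + 1)) := by
  intro m
  induction m generalizing s with
  | zero => intro h; exact h.elim
  | succ n ih => intro h t hrt; exact ih (h t hrt)

lemma boxn_mono_le {M : KModel} {s : M.W} {m n : ℕ} (h : m ≤ n)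
    (hs : M.sat s (boxn m)) : M.sat s (boxn n) := by
  induction n with
  | zero => simpa [Nat.le_zero.mp h] using hs
  | succ k ih =>
    rcases Nat.lt_or_ge m (k + 1) with h' | h'
    · exact boxn_mono k (ih (Nat.lt_succ_iff.mp h'))
    · have : m = k + 1 := le_antisymm h h'
      simpa [this] using hs

lemma boxn_conns : ∀ m, (boxn m).conns ⊆ {Conn.box, Conn.bot} := by
  intro m
  induction m with
  | zero => simp [boxn, MF.conns]
  | succ n ih =>
    simp only [boxn, MF.conns]
    intro c hc
    rcases hc with hc | hc
    · exact ih hc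
    · simp only [Set.mem_singleton_iff] at hc
      simp [hc]

lemma dian_conns : ∀ m, (dian m).conns ⊆ {Conn.box, Conn.bot, Conn.dia} := by
  intro m
  induction m with
  | zero =>
    simp only [dian, MF.conns]
    intro c hc
    rcases hc with hc | hc <;>
      simp only [Set.mem_singleton_iff] at hc <;> simp [hc]
  | succ n ih =>
    simp only [dian, MF.conns]
    intro c hc
    rcases hc with hc | hc
    · exact ih hc
    · simp only [Set.mem_singleton_iff] at hc
      simp [hc]

lemma boxn_pvars : ∀ m, (boxn m).pvars = ∅ := by
  intro m; induction m with
  | zero => simp [boxn, MF.pvars]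
  | succ n ih => simp [boxn, MF.pvars, ih]

lemma boxn_nvars : ∀ m, (boxn m).nvars = ∅ := by
  intro m; induction m with
  | zero => simp [boxn, MF.nvars]
  | succ n ih => simp [boxn, MF.nvars, ih]

lemma dian_pvars : ∀ m, (dian m).pvars = ∅ := by
  intro m; induction m with
  | zero => simp [dian, MF.pvars]
  | succ n ih => simp [dian, MF.pvars, ih]

lemma dian_nvars : ∀ m, (dian m).nvars = ∅ := by
  intro m; induction m with
  | zero => simp [dian, MF.nvars]
  | succ n ih => simp [dian, MF.nvars, ih]

lemma psi_conns (a b : ℕ) :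
    ((MF.box .bot).or ((boxn a).and (dian b))).conns ⊆
      ({Conn.box, Conn.dia, Conn.conj, Conn.disj, Conn.bot} : Set Conn) := by
  intro c hc
  simp only [MF.conns, Set.mem_union, Set.mem_singleton_iff] at hc
  rcases hc with ((hc | hc) | ((hc | hc) | hc)) | hc
  · simp [hc]
  · simp [hc]
  · have h := boxn_conns a hc
    simp only [Set.mem_insert_iff, Set.mem_singleton_iff] at h
    rcases h with h | h <;> simp [h]
  · have h := dian_conns b hc
    simp only [Set.mem_insert_iff, Set.mem_singleton_iff] at h
    rcases h with h | h | h <;> simp [h]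
  · simp [hc]
  · simp [hc]

lemma psi_pvars (a b : ℕ) :
    ((MF.box .bot).or ((boxn a).and (dian b))).pvars = ∅ := by
  simp [MF.pvars, boxn_pvars, dian_pvars]

lemma psi_nvars (a b : ℕ) :
    ((MF.box .bot).or ((boxn a).and (dian b))).nvars = ∅ := by
  simp [MF.nvars, boxn_nvars, dian_nvars]

/-- The chain model of length `N`: worlds `0 → 1 → ⋯ → N`. -/
def chainM (N : ℕ) : KModel :=
  ⟨Fin (N + 1), fun i j => (i : ℕ) + 1 = (j : ℕ), fun _ => ∅⟩

lemma chain_dian {N : ℕ} : ∀ j k (hk : k + j = N),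
    (chainM N).sat ⟨k, by omega⟩ (dian j) := by
  intro j
  induction j with
  | zero =>
    intro k hk t hrt
    show False
    have ht : (t : Fin (N + 1)).val < N + 1 := (t : Fin (N + 1)).isLt
    have hrt' : k + 1 = (t : Fin (N + 1)).val := hrt
    omega
  | succ n ih =>
    intro k hk
    exact ⟨⟨k + 1, by omega⟩, rfl, ih (k + 1) (by omega)⟩

lemma chain_boxn {N : ℕ} : ∀ j (t : Fin (N + 1)), N < (t : ℕ) + j →
    (chainM N).sat t (boxn j) := by
  intro j
  induction j with
  | zero =>
    intro t hj
    show False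
    have := t.isLt
    omega
  | succ n ih =>
    intro t hj u hru
    have hru' : (t : ℕ) + 1 = (u : Fin (N + 1)).val := hru
    exact ih u (by omega)

/-- The positive modal language with falsum, `L⁺_{□,◇,∧,∨,⊥}`, is not finitely
characterizable: there exist a finite set `P` of propositional variables and a formula
`φ ∈ L⁺_{□,◇,∧,∨,⊥}[P]` that has no finite characterization with respect to
`L⁺_{□,◇,∧,∨,⊥}[P]`. -/
theorem posLang_with_bot_not_finitely_characterizable :
    ∃ P : Set ℕ, P.Finite ∧ ∃ φ : MF,
      inPosLang {Conn.box, Conn.dia, Conn.conj, Conn.disj, Conn.bot} P φ ∧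
      ∀ Epos Eneg : Set PModel,
        ¬ FinChar {ψ : MF | inPosLang {Conn.box, Conn.dia, Conn.conj, Conn.disj, Conn.bot} P ψ}
            φ Epos Eneg := by
  classical
  refine ⟨{0}, Set.finite_singleton 0, MF.box .bot, ?_, ?_⟩
  · refine ⟨⟨?_, ?_⟩, ?_⟩
    · intro c hc
      simp only [MF.conns, Set.union_empty, Set.mem_union, Set.mem_singleton_iff] at hc
      rcases hc with hc | hc <;> simp [hc]
    · simp [MF.vars, MF.pvars, MF.nvars]
    · simp [Positive, MF.nvars]
  · intro Epos Eneg hFC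
    obtain ⟨_, hnegfin, _, _, ⟨hpos, hneg⟩, hmin⟩ := hFC
    -- depth function on negative examples
    set D : PModel → ℕ := fun e =>
      if h : ∃ m, e.sat (boxn m) then h.choose else 0 with hD
    obtain ⟨B, hB⟩ := (hnegfin.image D).bddAbove
    set N : ℕ := B + 1 with hN
    -- the competitor formula ψ = □⊥ ∨ (□^{N+1}⊥ ∧ ◇^N □⊥)
    set γ : MF := (boxn (N + 1)).and (dian N) with hγ
    set ψ : MF := (MF.box .bot).or γ with hψ
    -- ψ is in the language
    have hlang : inPosLang {Conn.box, Conn.dia, Conn.conj, Conn.disj, Conn.bot} {0} ψ := by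
      refine ⟨⟨?_, ?_⟩, ?_⟩
      · rw [hψ, hγ]; exact psi_conns (N + 1) N
      · rw [hψ, hγ]
        simp [MF.vars, psi_pvars, psi_nvars]
      · rw [Positive, hψ, hγ, psi_nvars]
    -- ψ fits the examples
    have hfits : Fits ψ Epos Eneg := by
      constructor
      · intro e he
        exact Or.inl (hpos e he)
      · intro e he hsat
        rcases hsat with hsat | hsat
        · exact hneg e he hsat
        · obtain ⟨h1, h2⟩ := hsat
          by_cases h : ∃ m, e.sat (boxn m)
          · -- e satisfies boxn (D e), hence boxn N, contradicting ◇^N □⊥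
            have hDe : e.sat (boxn (D e)) := by
              simp only [hD, dif_pos h]
              exact h.choose_spec
            have hle : D e ≤ N := by
              have : D e ∈ D '' Eneg := ⟨e, he, rfl⟩
              have := hB this
              omega
            exact dian_not_boxn N h2 (boxn_mono_le hle hDe)
          · push_neg at h
            exact h (N + 1) h1
    -- hence ψ is equivalent to □⊥
    have hequiv : EquivF (MF.box .bot) ψ := hmin ψ hlang hfits
    -- but the chain of length N separates them
    set c : PModel := ⟨chainM N, ⟨0, by omega⟩⟩ with hc
    have hcψ : c.sat ψ := by
      refine Or.inr ⟨?_, ?_⟩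
      · exact chain_boxn (N + 1) ⟨0, by omega⟩ (by simp)
      · exact chain_dian N 0 (by omega)
    have hcφ : ¬ c.sat (MF.box .bot) := by
      intro hsat
      exact hsat ⟨1, by omega⟩ rfl
    exact hcφ ((hequiv c).mpr hcψ)
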